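/- Let g : ℝ → ℝ be defined by g(y) = sin(2y)/(2y) for y ≠ 0 and g(0) = 1. Then g is differentiable on ℝ and |g'(y)| ≤ (4/3)|y| for all y ∈ ℝ. -/

import Mathlib

open Real intervalIntegral MeasureTheory

/-- `g(y) = sin(2y)/(2y)` for `y ≠ 0`, `g(0) = 1`. -/
noncomputable def gfun (y : ℝ) : ℝ := if y = 0 then 1 else Real.sin (2 * y) / (2 * y)

lemma gfun_eq (y : ℝ) : gfun y = ∫ t in (0:ℝ)..1, Real.cos (2 * t * y) := by
  rcases eq_or_ne y 0 with rfl | hy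
  · simp [gfun]
  · have h2y : (2 * y) ≠ 0 := by positivity
    have : ∫ t in (0:ℝ)..1, Real.cos (2 * t * y)
        = ∫ t in (0:ℝ)..1, Real.cos ((2 * y) * t) := by
      congr 1; ext t; ring_nf
    rw [gfun, if_neg hy, this, intervalIntegral.integral_comp_mul_left _ h2y]
    simp [h2y, div_eq_inv_mul]

lemma gfun_hasDerivAt (y : ℝ) :
    HasDerivAt gfun (∫ t in (0:ℝ)..1, -2 * t * Real.sin (2 * t * y)) y := by
  have key := intervalIntegral.hasDerivAt_integral_of_dominated_loc_of_deriv_le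
    (F := fun x t => Real.cos (2 * t * x))
    (F' := fun x t => -2 * t * Real.sin (2 * t * x)) (x₀ := y)
    (bound := fun t => 2 * |t|) (a := 0) (b := 1) (μ := volume) (s := Set.univ)
    Filter.univ_mem
    (Filter.Eventually.of_forall fun x =>
      (Continuous.aestronglyMeasurable (by continuity)).restrict)
    (Continuous.intervalIntegrable (by continuity) _ _)
    (Continuous.aestronglyMeasurable (by continuity)).restrict
    (Filter.Eventually.of_forall fun t _ x _ => by
      have : ‖-2 * t * Real.sin (2 * t * x)‖ = 2 * |t| * |Real.sin (2 * t * x)| := by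
        rw [norm_mul]; simp [abs_mul]
      rw [this]
      exact mul_le_of_le_one_right (by positivity)
        (abs_le.mpr ⟨Real.neg_one_le_sin _, Real.sin_le_one _⟩))
    (Continuous.intervalIntegrable (by continuity) _ _)
    (Filter.Eventually.of_forall fun t _ x _ => by
      have h : HasDerivAt (fun x : ℝ => 2 * t * x) (2 * t) x := by
        simpa using (hasDerivAt_id x).const_mul (2 * t)
      have := h.cos
      exact this.congr_deriv (by ring))
  have h := key.2
  have : gfun = fun x => ∫ t in (0:ℝ)..1, Real.cos (2 * t * x) := by
    ext x; exact gfun_eq x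
  rw [this]
  exact h

/-- `g` is differentiable on `ℝ` and `|g'(y)| ≤ (4/3)|y|` for all `y`. -/
theorem stmt10 : Differentiable ℝ gfun ∧ ∀ y : ℝ, |deriv gfun y| ≤ 4 / 3 * |y| := by
  refine ⟨fun y => (gfun_hasDerivAt y).differentiableAt, fun y => ?_⟩
  rw [(gfun_hasDerivAt y).deriv]
  have hle : ∀ t : ℝ, ‖-2 * t * Real.sin (2 * t * y)‖ ≤ 4 * t ^ 2 * |y| := by
    intro t
    have h0 : ‖-2 * t * Real.sin (2 * t * y)‖ = 2 * |t| * |Real.sin (2 * t * y)| := by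
      rw [norm_mul]; simp [abs_mul]
    rw [h0]
    have h1 : |Real.sin (2 * t * y)| ≤ |2 * t * y| := Real.abs_sin_le_abs
    have h2 : |2 * t * y| = 2 * |t| * |y| := by simp [abs_mul]
    calc 2 * |t| * |Real.sin (2 * t * y)| ≤ 2 * |t| * (2 * |t| * |y|) := by
          rw [← h2]; exact mul_le_mul_of_nonneg_left h1 (by positivity)
      _ = 4 * t ^ 2 * |y| := by rw [← sq_abs]; ring
  have hbound := intervalIntegral.norm_integral_le_of_norm_le
    (f := fun t => -2 * t * Real.sin (2 * t * y)) (g := fun t => 4 * t ^ 2 * |y|)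
    (a := 0) (b := 1) (μ := MeasureTheory.volume)
    zero_le_one
    (Filter.Eventually.of_forall fun t _ => hle t)
    (Continuous.intervalIntegrable (by continuity) _ _)
  have hval : (∫ t in (0:ℝ)..1, 4 * t ^ 2 * |y|) = 4 / 3 * |y| := by
    have : (fun t : ℝ => 4 * t ^ 2 * |y|) = fun t : ℝ => (4 * |y|) * t ^ 2 := by
      ext t; ring
    rw [this, intervalIntegral.integral_const_mul, integral_pow]
    norm_num; ring
  rw [hval] at hbound
  simpa [Real.norm_eq_abs,
    abs_of_nonneg (show (0:ℝ) ≤ 4 / 3 * |y| by positivity)] using hbound
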